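/- The number of noncrossing partitions of the set {1,...,n} is the Catalan number (1/(n+1)) * binomial(2n, n). -/

import Mathlib

/-- Encoding of a noncrossing partition of `{0,…,n-1}` as the function sending each
element to the minimum of its block (and `0` outside the range). -/
def NCFun (n : ℕ) (f : ℕ → ℕ) : Prop :=
  (∀ i, f i ≤ i) ∧ (∀ i, f (f i) = f i) ∧
  (∀ y z, z < n → f z ≤ y → y ≤ z → f z ≤ f y) ∧ (∀ i, n ≤ i → f i = 0)

abbrev NCF (n : ℕ) := {f : ℕ → ℕ // NCFun n f}

/-- A set partition of `{0, …, n-1}` is noncrossing if there is no quadruple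
`a < b < c < d` with `a, c` in one block and `b, d` in a different block. -/
def IsNoncrossing {n : ℕ} (P : Finpartition (Finset.univ : Finset (Fin n))) : Prop :=
  ¬ ∃ (a b c d : Fin n) (B B' : Finset (Fin n)), a < b ∧ b < c ∧ c < d ∧
      B ∈ P.parts ∧ B' ∈ P.parts ∧ B ≠ B' ∧ a ∈ B ∧ c ∈ B ∧ b ∈ B' ∧ d ∈ B'

instance NCF.finite (n : ℕ) : Finite (NCF n) := by
  apply Finite.of_injective (fun f : NCF n => fun x : Fin n =>
    (⟨f.1 x.1, lt_of_le_of_lt (f.2.1 x.1) x.2⟩ : Fin n))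
  intro f g h
  ext m
  by_cases hm : m < n
  · exact congrArg Fin.val (congrFun h ⟨m, hm⟩)
  · rw [f.2.2.2.2 m (le_of_not_gt hm), g.2.2.2.2 m (le_of_not_gt hm)]

instance NCF.unique0 : Unique (NCF 0) where
  default := ⟨fun _ => 0, ⟨fun _ => Nat.zero_le _, fun _ => rfl, fun _ _ _ _ _ => le_rfl,
    fun _ _ => rfl⟩⟩
  uniq f := by
    apply Subtype.ext; funext m; exact f.2.2.2.2 m (Nat.zero_le m)

/-- The split index: least `m ∈ [1,n]` with `f m = 0`, or `n+1` if none. -/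
def splitIdx (n : ℕ) (f : ℕ → ℕ) : ℕ :=
  Nat.find (⟨n+1, Or.inr rfl⟩ : ∃ m, (0 < m ∧ f m = 0) ∨ m = n + 1)

def leftF (j : ℕ) (f : ℕ → ℕ) : ℕ → ℕ := fun k => if k < j - 1 then f (k+1) - 1 else 0

def rightF (n j : ℕ) (f : ℕ → ℕ) : ℕ → ℕ := fun k => if k < n + 1 - j then f (k + j) - j else 0

def joinF (n i : ℕ) (g h : ℕ → ℕ) : ℕ → ℕ := fun m =>
  if m = 0 then 0 else if m ≤ i then g (m-1) + 1
  else if m ≤ n then (if h (m - (i+1)) = 0 then 0 else h (m - (i+1)) + (i+1)) else 0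

section Split
variable {n : ℕ} {f : ℕ → ℕ} (hf : NCFun (n+1) f)

lemma splitIdx_pos : 0 < splitIdx n f := by
  rw [splitIdx, Nat.lt_find_iff]
  intro m hm; omega

lemma splitIdx_le : splitIdx n f ≤ n + 1 :=
  Nat.find_le (Or.inr rfl)

lemma splitIdx_spec (h : splitIdx n f ≤ n) : f (splitIdx n f) = 0 := by
  have := Nat.find_spec (⟨n+1, Or.inr rfl⟩ : ∃ m, (0 < m ∧ f m = 0) ∨ m = n + 1)
  rw [← splitIdx] at this
  rcases this with ⟨_, h0⟩ | h1
  · exact h0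
  · omega

lemma lt_splitIdx (hm : 0 < m) (h : m < splitIdx n f) : f m ≠ 0 := by
  have := Nat.find_min (⟨n+1, Or.inr rfl⟩ : ∃ m, (0 < m ∧ f m = 0) ∨ m = n + 1)
    (m := m) h
  intro h0
  exact this (Or.inl ⟨hm, h0⟩)

include hf in
/-- elements `≥ splitIdx` have `f`-value `0` or `> splitIdx`. -/
lemma splitIdx_dichotomy {m : ℕ} (hm : splitIdx n f ≤ m) (hmn : m ≤ n) :
    f m = 0 ∨ splitIdx n f < f m := by
  set j := splitIdx n f with hj
  have hjn : j ≤ n := le_trans hm hmn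
  have hfj : f j = 0 := splitIdx_spec hjn
  by_contra hcon
  push_neg at hcon
  obtain ⟨h0, hle⟩ := hcon
  -- f m ≤ j, apply monotone condition at (y := j, z := m)
  have h1 : f m ≤ f j := hf.2.2.1 j m (by omega) hle hm
  rw [hfj] at h1
  exact h0 (Nat.le_zero.mp h1)

include hf in
lemma ncfun_leftF : NCFun (splitIdx n f - 1) (leftF (splitIdx n f) f) := by
  set j := splitIdx n f with hj
  have hj1 : 0 < j := splitIdx_pos
  have hjn : j ≤ n + 1 := splitIdx_le
  have key : ∀ k, k < j - 1 → 0 < f (k+1) ∧ f (k+1) ≤ k + 1 := by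
    intro k hk
    refine ⟨Nat.pos_of_ne_zero (lt_splitIdx (n := n) (by omega) (by omega)), hf.1 _⟩
  refine ⟨?_, ?_, ?_, ?_⟩
  · intro k
    by_cases hk : k < j - 1
    · simp only [leftF, if_pos hk]
      have := (key k hk).2; omega
    · simp [leftF, hk]
  · intro k
    by_cases hk : k < j - 1
    · have h1 := key k hk
      have h2 : f (k+1) - 1 < j - 1 := by omega
      simp only [leftF, if_pos hk, if_pos h2]
      have : f (k+1) - 1 + 1 = f (k+1) := by omega
      rw [this, hf.2.1]
    · have : leftF j f k = 0 := by simp [leftF, hk]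
      rw [this]
      by_cases h0 : (0:ℕ) < j - 1
      · have h1 := key 0 h0
        norm_num at h1
        have : f 1 = 1 := by omega
        simp [leftF, h0, this]
      · simp [leftF, h0]
  · intro y z hz hzy hyz
    have hy : y < j - 1 := by omega
    simp only [leftF, if_pos hz, if_pos hy] at *
    have h1 := key z hz
    have h2 := key y hy
    have h3 : f (z+1) ≤ y + 1 := by omega
    have h4 := hf.2.2.1 (y+1) (z+1) (by omega) h3 (by omega)
    omega
  · intro k hk; simp only [leftF, if_neg (by omega : ¬ k < j - 1)]

include hf in
lemma ncfun_rightF : NCFun (n + 1 - splitIdx n f) (rightF n (splitIdx n f) f) := by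
  set j := splitIdx n f with hj
  have hj1 : 0 < j := splitIdx_pos
  have hjn : j ≤ n + 1 := splitIdx_le
  have key : ∀ k, k < n + 1 - j → f (k + j) = 0 ∨ j < f (k + j) := by
    intro k hk
    exact splitIdx_dichotomy hf (by omega) (by omega)
  have r0 : rightF n j f 0 = 0 := by
    by_cases h0 : (0:ℕ) < n + 1 - j
    · have hfj : f j = 0 := splitIdx_spec (by omega)
      simp [rightF, h0, hfj]
    · simp [rightF, h0]
  refine ⟨?_, ?_, ?_, ?_⟩
  · intro k
    by_cases hk : k < n + 1 - j
    · simp only [rightF, if_pos hk]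
      have := hf.1 (k + j); omega
    · simp [rightF, hk]
  · intro k
    by_cases hk : k < n + 1 - j
    · rcases key k hk with h0 | h0
      · have : rightF n j f k = 0 := by simp [rightF, hk, h0]
        rw [this, r0]
      · have hv : rightF n j f k = f (k + j) - j := by simp [rightF, hk]
        have hvk : f (k + j) - j ≤ k := by have := hf.1 (k + j); omega
        have hv2 : f (k + j) - j < n + 1 - j := by omega
        rw [hv]
        simp only [rightF, if_pos hv2]
        have : f (k + j) - j + j = f (k + j) := by omega
        rw [this, hf.2.1]
    · have : rightF n j f k = 0 := by simp [rightF, hk]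
      rw [this, r0]
  · intro y z hz hzy hyz
    have hy : y < n + 1 - j := by omega
    rcases key z hz with h0 | h0
    · simp [rightF, if_pos hz, h0]
    · simp only [rightF, if_pos hz, if_pos hy] at *
      have h3 : f (z + j) ≤ y + j := by omega
      have h4 := hf.2.2.1 (y + j) (z + j) (by omega) h3 (by omega)
      omega
  · intro k hk; simp only [rightF, if_neg (by omega : ¬ k < n + 1 - j)]

end Split

section Join
variable {n i : ℕ} {g h : ℕ → ℕ} (hg : NCFun i g) (hh : NCFun (n - i) h) (hi : i ≤ n)

include hg hh hi in
lemma ncfun_joinF : NCFun (n+1) (joinF n i g h) := by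
  have h00 : h 0 = 0 := Nat.le_zero.mp (hh.1 0)
  have J0 : joinF n i g h 0 = 0 := by simp [joinF]
  have J2 : ∀ m, 1 ≤ m → m ≤ i → joinF n i g h m = g (m-1) + 1 := by
    intro m h1 h2; rw [joinF, if_neg (by omega : ¬ m = 0), if_pos h2]
  have J3 : ∀ m, i + 1 ≤ m → m ≤ n →
      joinF n i g h m = (if h (m - (i+1)) = 0 then 0 else h (m - (i+1)) + (i+1)) := by
    intro m h1 h2
    rw [joinF, if_neg (by omega : ¬ m = 0), if_neg (by omega : ¬ m ≤ i), if_pos h2]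
  have J4 : ∀ m, n + 1 ≤ m → joinF n i g h m = 0 := by
    intro m h1
    rw [joinF, if_neg (by omega : ¬ m = 0), if_neg (by omega : ¬ m ≤ i),
      if_neg (by omega : ¬ m ≤ n)]
  refine ⟨?_, ?_, ?_, ?_⟩
  · intro m
    rcases Nat.eq_zero_or_pos m with rfl | h1
    · rw [J0]
    rcases le_or_gt m i with h2 | h2
    · rw [J2 m h1 h2]; have := hg.1 (m-1); omega
    rcases le_or_gt m n with h3 | h3
    · rw [J3 m h2 h3]
      split
      · omega
      · have := hh.1 (m - (i+1)); omega
    · rw [J4 m h3]; omega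
  · intro m
    rcases Nat.eq_zero_or_pos m with rfl | h1
    · rw [J0, J0]
    rcases le_or_gt m i with h2 | h2
    · rw [J2 m h1 h2]
      have hgle := hg.1 (m-1)
      rw [J2 _ (by omega) (by omega)]
      simp only [Nat.add_sub_cancel]
      rw [hg.2.1]
    rcases le_or_gt m n with h3 | h3
    · rw [J3 m h2 h3]
      by_cases h4 : h (m - (i+1)) = 0
      · simp only [if_pos h4]; rw [J0]
      · simp only [if_neg h4]
        have hhle := hh.1 (m - (i+1))
        rw [J3 _ (by omega) (by omega)]
        simp only [Nat.add_sub_cancel]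
        rw [hh.2.1, if_neg h4]
    · rw [J4 m h3, J0]
  · intro y z hz hzy hyz
    rcases Nat.eq_zero_or_pos z with rfl | h1
    · rw [J0] at *; omega
    rcases le_or_gt z i with h2 | h2
    · rw [J2 z h1 h2] at *
      have hy1 : 1 ≤ y := by omega
      rw [J2 y hy1 (by omega)]
      have := hg.2.2.1 (y-1) (z-1) (by omega) (by omega) (by omega)
      omega
    · rw [J3 z h2 (by omega)] at *
      by_cases h4 : h (z - (i+1)) = 0
      · simp only [if_pos h4] at *
        rw [J0] at *; omega
      · simp only [if_neg h4] at *
        have hy1 : i + 1 ≤ y := by omega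
        rw [J3 y hy1 (by omega)]
        have hmono := hh.2.2.1 (y - (i+1)) (z - (i+1)) (by omega)
          (by omega) (by omega)
        have h5 : ¬ h (y - (i+1)) = 0 := by omega
        simp only [if_neg h5]
        omega
  · intro m hm; exact J4 m hm

include hh hi in
lemma splitIdx_joinF : splitIdx n (joinF n i g h) = i + 1 := by
  have h00 : h 0 = 0 := Nat.le_zero.mp (hh.1 0)
  rw [splitIdx, Nat.find_eq_iff]
  constructor
  · rcases le_or_gt (i+1) n with h1 | h1
    · left
      refine ⟨by omega, ?_⟩
      rw [joinF, if_neg (by omega : ¬ i + 1 = 0), if_neg (by omega : ¬ i + 1 ≤ i),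
        if_pos h1]
      simp [h00]
    · right; omega
  · intro m hm hp
    rcases hp with ⟨h1, h2⟩ | h1
    · rw [show joinF n i g h m = g (m-1) + 1 by
        rw [joinF, if_neg (by omega : ¬ m = 0), if_pos (by omega : m ≤ i)]] at h2
      omega
    · omega

end Join

section Apply
variable {n i m : ℕ} {g h : ℕ → ℕ}

lemma joinF_apply_zero : joinF n i g h 0 = 0 := by simp [joinF]

lemma joinF_apply_low (h1 : 1 ≤ m) (h2 : m ≤ i) : joinF n i g h m = g (m-1) + 1 := by
  rw [joinF, if_neg (by omega : ¬ m = 0), if_pos h2]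

lemma joinF_apply_high (h1 : i+1 ≤ m) (h2 : m ≤ n) :
    joinF n i g h m = if h (m-(i+1)) = 0 then 0 else h (m-(i+1)) + (i+1) := by
  rw [joinF, if_neg (by omega : ¬ m = 0), if_neg (by omega : ¬ m ≤ i), if_pos h2]

lemma joinF_apply_top (h1 : n+1 ≤ m) (h2 : i ≤ n) : joinF n i g h m = 0 := by
  rw [joinF, if_neg (by omega : ¬ m = 0), if_neg (by omega : ¬ m ≤ i),
    if_neg (by omega : ¬ m ≤ n)]

end Apply

lemma join_split {n : ℕ} {f : ℕ → ℕ} (hf : NCFun (n+1) f) :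
    joinF n (splitIdx n f - 1) (leftF (splitIdx n f) f) (rightF n (splitIdx n f) f) = f := by
  set j := splitIdx n f with hj
  have hj1 : 0 < j := splitIdx_pos
  have hjn : j ≤ n + 1 := splitIdx_le
  funext m
  rcases Nat.eq_zero_or_pos m with rfl | h1
  · rw [joinF_apply_zero]
    have := hf.1 0; omega
  rcases le_or_gt m (j - 1) with h2 | h2
  · rw [joinF_apply_low h1 h2, leftF, if_pos (by omega : m - 1 < j - 1)]
    have h3 : m - 1 + 1 = m := by omega
    rw [h3]
    have h4 : f m ≠ 0 := lt_splitIdx (n := n) h1 (by omega)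
    omega
  rcases le_or_gt m n with h3 | h3
  · rw [joinF_apply_high (by omega) h3, rightF,
      if_pos (by omega : m - ((j-1)+1) < n + 1 - j)]
    have h4 : m - ((j-1)+1) + j = m := by omega
    rw [h4]
    have h5 : (j - 1) + 1 = j := by omega
    rw [h5]
    rcases splitIdx_dichotomy hf (by omega) h3 with h6 | h6
    · rw [if_pos (by omega : f m - j = 0)]; omega
    · rw [if_neg (by omega : ¬ f m - j = 0)]; omega
  · rw [joinF_apply_top (by omega) (by omega), hf.2.2.2 m (by omega)]

lemma left_join {n i : ℕ} {g h : ℕ → ℕ} (hg : NCFun i g) :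
    leftF (i+1) (joinF n i g h) = g := by
  funext k
  by_cases hk : k < (i+1) - 1
  · rw [leftF, if_pos hk, joinF_apply_low (by omega) (by omega)]
    simp
  · rw [leftF, if_neg hk, hg.2.2.2 k (by omega)]

lemma right_join {n i : ℕ} {g h : ℕ → ℕ} (hh : NCFun (n-i) h) (hi : i ≤ n) :
    rightF n (i+1) (joinF n i g h) = h := by
  funext k
  by_cases hk : k < n + 1 - (i+1)
  · rw [rightF, if_pos hk, joinF_apply_high (by omega) (by omega)]
    have h1 : k + (i+1) - (i+1) = k := by omega
    rw [h1]
    by_cases h2 : h k = 0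
    · rw [if_pos h2]; omega
    · rw [if_neg h2]; omega
  · rw [rightF, if_neg hk, hh.2.2.2 k (by omega)]

/-- The joining map underlying the Catalan recurrence. -/
def joinMap (n : ℕ) : (Σ i : Fin (n+1), NCF i × NCF (n - i)) → NCF (n+1) := fun x =>
  ⟨joinF n x.1.1 x.2.1.1 x.2.2.1,
    ncfun_joinF x.2.1.2 x.2.2.2 (by have := x.1.2; omega)⟩

lemma joinMap_bijective (n : ℕ) : Function.Bijective (joinMap n) := by
  constructor
  · rintro ⟨⟨i, hi⟩, g, h⟩ ⟨⟨i', hi'⟩, g', h'⟩ heq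
    have hE : joinF n i g.1 h.1 = joinF n i' g'.1 h'.1 := congrArg Subtype.val heq
    have h1 : splitIdx n (joinF n i g.1 h.1) = i + 1 := splitIdx_joinF h.2 (by omega)
    have h2 : splitIdx n (joinF n i' g'.1 h'.1) = i' + 1 := splitIdx_joinF h'.2 (by omega)
    rw [hE, h2] at h1
    obtain rfl : i = i' := by omega
    have hg : g.1 = g'.1 := by
      rw [← left_join (n := n) (h := h.1) g.2, ← left_join (n := n) (h := h'.1) g'.2, hE]
    have hh : h.1 = h'.1 := by
      rw [← right_join (g := g.1) h.2 (by omega : i ≤ n),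
        ← right_join (g := g'.1) h'.2 (by omega : i ≤ n), hE]
    have : (⟨i, hi⟩ : Fin (n+1)) = ⟨i, hi'⟩ := rfl
    refine Sigma.ext this (heq_of_eq ?_)
    rw [Prod.ext_iff]
    exact ⟨Subtype.ext hg, Subtype.ext hh⟩
  · intro f
    refine ⟨⟨⟨splitIdx n f.1 - 1, by have := splitIdx_le (n := n) (f := f.1); omega⟩,
      ⟨leftF (splitIdx n f.1) f.1, ncfun_leftF f.2⟩,
      ⟨rightF n (splitIdx n f.1) f.1, by
        have h1 := splitIdx_pos (n := n) (f := f.1)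
        have h2 : n - (splitIdx n f.1 - 1) = n + 1 - splitIdx n f.1 := by omega
        rw [h2]
        exact ncfun_rightF f.2⟩⟩, ?_⟩
    apply Subtype.ext
    show joinF n (splitIdx n f.1 - 1) (leftF (splitIdx n f.1) f.1)
      (rightF n (splitIdx n f.1) f.1) = f.1
    exact join_split f.2

lemma card_sigma_fin {N : ℕ} (F : Fin N → Type*) [∀ i, Finite (F i)] :
    Nat.card (Σ i, F i) = ∑ i, Nat.card (F i) := by
  letI : ∀ i, Fintype (F i) := fun i => Fintype.ofFinite _
  rw [Nat.card_eq_fintype_card, Fintype.card_sigma]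
  simp [Nat.card_eq_fintype_card]

lemma card_NCF (n : ℕ) : Nat.card (NCF n) = catalan n := by
  induction n using Nat.strong_induction_on with
  | _ n ih =>
    match n with
    | 0 => simp [Nat.card_unique, catalan_zero]
    | (m+1) =>
      rw [← Nat.card_eq_of_bijective _ (joinMap_bijective m), card_sigma_fin, catalan_succ]
      refine Finset.sum_congr rfl fun i _ => ?_
      rw [Nat.card_prod, ih i (by omega), ih (m - i) (by omega)]

section Partition
open Finset
variable {n : ℕ} (P : Finpartition (Finset.univ : Finset (Fin n)))

/-- The minimum of the block containing `a`. -/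
def blockMin (a : Fin n) : Fin n :=
  (P.part a).min' ⟨a, P.mem_part (Finset.mem_univ a)⟩

lemma blockMin_mem (a : Fin n) : blockMin P a ∈ P.part a :=
  Finset.min'_mem _ _

lemma blockMin_le (a : Fin n) : blockMin P a ≤ a :=
  Finset.min'_le _ _ (P.mem_part (Finset.mem_univ a))

lemma blockMin_le_of_mem {a b : Fin n} (hb : b ∈ P.part a) : blockMin P a ≤ b :=
  Finset.min'_le _ _ hb

lemma part_blockMin (a : Fin n) : P.part (blockMin P a) = P.part a :=
  P.part_eq_of_mem (P.part_mem.mpr (Finset.mem_univ a)) (blockMin_mem P a)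

lemma blockMin_idem (a : Fin n) : blockMin P (blockMin P a) = blockMin P a := by
  unfold blockMin
  congr 1
  exact part_blockMin P a

lemma part_eq_iff_blockMin_eq {a b : Fin n} :
    P.part a = P.part b ↔ blockMin P a = blockMin P b := by
  constructor
  · intro h; unfold blockMin; congr 1
  · intro h
    rw [← part_blockMin P a, ← part_blockMin P b, h]

lemma part_eq_of_mem_parts {B : Finset (Fin n)} (hB : B ∈ P.parts) {a : Fin n} (ha : a ∈ B) :
    P.part a = B :=
  P.part_eq_of_mem hB ha

/-- Encode a partition as the function sending each element to the minimum of its block. -/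
def partFun : ℕ → ℕ := fun m =>
  if h : m < n then (blockMin P ⟨m, h⟩ : Fin n).1 else 0

lemma partFun_lt {m : ℕ} (h : m < n) : partFun P m = (blockMin P ⟨m, h⟩).1 := by
  rw [partFun, dif_pos h]

lemma ncfun_partFun (hP : IsNoncrossing P) : NCFun n (partFun P) := by
  refine ⟨?_, ?_, ?_, ?_⟩
  · intro m
    by_cases h : m < n
    · rw [partFun_lt P h]; exact blockMin_le P ⟨m, h⟩
    · rw [partFun, dif_neg h]; omega
  · intro m
    by_cases h : m < n
    · rw [partFun_lt P h]
      have h2 : (blockMin P ⟨m, h⟩).1 < n := (blockMin P ⟨m, h⟩).2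
      rw [partFun_lt P h2]
      congr 1
      have : (⟨(blockMin P ⟨m, h⟩).1, h2⟩ : Fin n) = blockMin P ⟨m, h⟩ := rfl
      rw [this, blockMin_idem]
    · have hm0 : partFun P m = 0 := by rw [partFun, dif_neg h]
      rw [hm0]
      by_cases h0 : (0:ℕ) < n
      · rw [partFun_lt P h0]
        have : blockMin P ⟨0, h0⟩ ≤ ⟨0, h0⟩ := blockMin_le P _
        have h1 : (blockMin P ⟨0, h0⟩).1 = 0 := Nat.le_zero.mp (Fin.le_def.mp this)
        exact h1
      · rw [partFun, dif_neg (by omega : ¬ (0:ℕ) < n)]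
  · intro y z hz hle hyz
    have hy : y < n := by omega
    rw [partFun_lt P hz] at *
    rw [partFun_lt P hy]
    set a := blockMin P ⟨y, hy⟩ with ha
    set b := blockMin P ⟨z, hz⟩ with hb
    by_contra hcon
    push_neg at hcon
    -- hcon : a < b as naturals
    have hab : a < b := Fin.lt_def.mpr hcon
    have hby : (b : Fin n) < ⟨y, hy⟩ := by
      rcases lt_or_eq_of_le (Fin.le_def.mpr (show (b:ℕ) ≤ ((⟨y, hy⟩ : Fin n):ℕ) from hle)) with h | h
      · exact h
      · exfalso
        -- b = ⟨y, hy⟩, so y ∈ part z, so parts equal, so a = b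
        have hmem : (⟨y, hy⟩ : Fin n) ∈ P.part ⟨z, hz⟩ := h ▸ blockMin_mem P _
        have := (P.mem_part_iff_part_eq_part (Finset.mem_univ _) (Finset.mem_univ _)).mp hmem
        have := (part_eq_iff_blockMin_eq P).mp this
        rw [← ha, ← hb] at this
        omega
    have hyz' : (⟨y, hy⟩ : Fin n) < ⟨z, hz⟩ := by
      rcases lt_or_eq_of_le (Fin.le_def.mpr (show ((⟨y, hy⟩ : Fin n):ℕ) ≤ ((⟨z, hz⟩ : Fin n):ℕ) from hyz)) with h | h
      · exact h
      · exfalso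
        have := (part_eq_iff_blockMin_eq P).mp (congrArg P.part h)
        rw [← ha, ← hb] at this
        omega
    apply hP
    refine ⟨a, b, ⟨y, hy⟩, ⟨z, hz⟩, P.part ⟨y, hy⟩, P.part ⟨z, hz⟩,
      hab, hby, hyz', P.part_mem.mpr (Finset.mem_univ _), P.part_mem.mpr (Finset.mem_univ _), ?_,
      blockMin_mem P _, P.mem_part (Finset.mem_univ _), blockMin_mem P _,
      P.mem_part (Finset.mem_univ _)⟩
    -- parts distinct
    intro hEq
    have := (part_eq_iff_blockMin_eq P).mp hEq
    rw [← ha, ← hb] at this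
    omega
  · intro m hm; rw [partFun, dif_neg (by omega)]

end Partition

section Bijection
variable {n : ℕ}

lemma finpartition_eq_of_part_eq {P Q : Finpartition (Finset.univ : Finset (Fin n))}
    (h : ∀ a, P.part a = Q.part a) : P = Q := by
  ext B
  constructor
  · intro hB
    obtain ⟨a, ha⟩ := P.nonempty_of_mem_parts hB
    rw [← part_eq_of_mem_parts P hB ha, h]
    exact Q.part_mem.mpr (Finset.mem_univ a)
  · intro hB
    obtain ⟨a, ha⟩ := Q.nonempty_of_mem_parts hB
    rw [← part_eq_of_mem_parts Q hB ha, ← h]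
    exact P.part_mem.mpr (Finset.mem_univ a)

lemma partFun_injective {P Q : Finpartition (Finset.univ : Finset (Fin n))}
    (h : partFun P = partFun Q) : P = Q := by
  have hbm : ∀ a : Fin n, blockMin P a = blockMin Q a := by
    intro a
    have h1 : partFun P a.1 = partFun Q a.1 := congrFun h a.1
    rw [partFun_lt P a.2, partFun_lt Q a.2] at h1
    have : (⟨a.1, a.2⟩ : Fin n) = a := rfl
    rw [this] at h1
    exact Fin.ext h1
  apply finpartition_eq_of_part_eq
  intro a
  ext x
  rw [P.mem_part_iff_part_eq_part (Finset.mem_univ x) (Finset.mem_univ a),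
    Q.mem_part_iff_part_eq_part (Finset.mem_univ x) (Finset.mem_univ a),
    part_eq_iff_blockMin_eq P, part_eq_iff_blockMin_eq Q, hbm, hbm]

lemma partFun_surjective (f : NCF n) :
    ∃ P : Finpartition (Finset.univ : Finset (Fin n)),
      IsNoncrossing P ∧ partFun P = f.1 := by
  obtain ⟨f, hf⟩ := f
  letI s : Setoid (Fin n) := ⟨fun a b => f a.1 = f b.1,
    ⟨fun _ => rfl, fun h => h.symm, fun h1 h2 => h1.trans h2⟩⟩
  letI : DecidableRel s.r := fun a b => Nat.decEq _ _
  refine ⟨Finpartition.ofSetoid s, ?_, ?_⟩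
  · -- noncrossing
    rintro ⟨a, b, c, d, B, B', hab, hbc, hcd, hB, hB', hBB', haB, hcB, hbB', hdB'⟩
    have hac : f a.1 = f c.1 := by
      have h1 := part_eq_of_mem_parts _ hB haB
      have h2 : c ∈ (Finpartition.ofSetoid s).part a := h1.symm ▸ hcB
      exact Finpartition.mem_part_ofSetoid_iff_rel.mp h2
    have hbd : f b.1 = f d.1 := by
      have h1 := part_eq_of_mem_parts _ hB' hbB'
      have h2 : d ∈ (Finpartition.ofSetoid s).part b := h1.symm ▸ hdB'
      exact Finpartition.mem_part_ofSetoid_iff_rel.mp h2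
    have hfa : f a.1 ≤ a.1 := hf.1 _
    have hfb : f b.1 ≤ b.1 := hf.1 _
    have h1 : f d.1 ≤ f c.1 := by
      refine hf.2.2.1 c.1 d.1 d.2 ?_ (Fin.le_def.mp hcd.le)
      have := Fin.lt_def.mp hbc
      omega
    have h2 : f c.1 ≤ f b.1 := by
      refine hf.2.2.1 b.1 c.1 c.2 ?_ (Fin.le_def.mp hbc.le)
      have := Fin.lt_def.mp hab
      omega
    have hcb : f c.1 = f b.1 := by omega
    -- so b ∈ part of c, contradicting B ≠ B'
    have hmem : b ∈ (Finpartition.ofSetoid s).part c :=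
      Finpartition.mem_part_ofSetoid_iff_rel.mpr hcb
    have e1 : (Finpartition.ofSetoid s).part c = B := part_eq_of_mem_parts _ hB hcB
    have e2 : (Finpartition.ofSetoid s).part b = B' := part_eq_of_mem_parts _ hB' hbB'
    rw [e1] at hmem
    exact hBB' ((part_eq_of_mem_parts _ hB hmem).symm.trans e2)
  · -- partFun recovers f
    funext m
    by_cases h : m < n
    · rw [partFun_lt _ h]
      have hlt : f m < n := lt_of_le_of_lt (hf.1 m) h
      have hbm : blockMin (Finpartition.ofSetoid s) ⟨m, h⟩ = ⟨f m, hlt⟩ := by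
        apply le_antisymm
        · apply blockMin_le_of_mem
          exact Finpartition.mem_part_ofSetoid_iff_rel.mpr (hf.2.1 m).symm
        · apply Finset.le_min'
          intro y hy
          have : f m = f y.1 := Finpartition.mem_part_ofSetoid_iff_rel.mp hy
          rw [Fin.le_def]
          calc (f m : ℕ) = f y.1 := this
          _ ≤ y.1 := hf.1 _
      rw [hbm]
    · rw [partFun, dif_neg h]
      exact (hf.2.2.2 m (by omega)).symm

end Bijection

lemma card_nc_eq (n : ℕ) :
    Nat.card {P : Finpartition (Finset.univ : Finset (Fin n)) // IsNoncrossing P} =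
      Nat.card (NCF n) := by
  apply Nat.card_eq_of_bijective (fun P => ⟨partFun P.1, ncfun_partFun P.1 P.2⟩)
  constructor
  · rintro ⟨P, hP⟩ ⟨Q, hQ⟩ h
    exact Subtype.ext (partFun_injective (congrArg Subtype.val h))
  · rintro f
    obtain ⟨P, hP, hPf⟩ := partFun_surjective f
    exact ⟨⟨P, hP⟩, Subtype.ext hPf⟩

/-- The number of noncrossing partitions of `{1, …, n}` is the Catalan number
`(1/(n+1)) * C(2n, n)`. -/
theorem stmt_4 (n : ℕ) :
    {P : Finpartition (Finset.univ : Finset (Fin n)) | IsNoncrossing P}.ncard =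
      Nat.choose (2 * n) n / (n + 1) := by
  rw [← Nat.card_coe_set_eq]
  have : Nat.card {P : Finpartition (Finset.univ : Finset (Fin n)) | IsNoncrossing P} =
      Nat.card {P : Finpartition (Finset.univ : Finset (Fin n)) // IsNoncrossing P} := rfl
  rw [this, card_nc_eq, card_NCF, catalan_eq_centralBinom_div, Nat.centralBinom]
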